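/- For every integer k ≥ 0, the row-wise divergence map M ↦ (∂_x(x P₁) + ∂_y(y P₁), ∂_x(x P₂) + ∂_y(y P₂)) is a linear isomorphism from the space of 2×2 polynomial matrices {M : M_{ij} = x_j P_i with P₁, P₂ ∈ 𝒫²_k and x P₁ + y P₂ = 0, where (x₁, x₂) = (x, y)} onto the space {(−y q, x q) : q ∈ 𝒫²_{k−1}}. -/

import Mathlib

open MvPolynomial

noncomputable section

/-- Real polynomials in the two variables `x, y` (indexed `0, 1`). -/
abbrev P2 := MvPolynomial (Fin 2) ℝ

/-- Membership in `𝒫²_m`, the space of polynomials of total degree at most `m`,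
with the convention `𝒫²_m = {0}` for `m < 0`. -/
def memP2 (m : ℤ) (p : P2) : Prop := p = 0 ∨ (p.totalDegree : ℤ) ≤ m

/-- The row-wise divergence of the `2×2` matrix with entries `M i j = x_j * P i`:
its `i`-th component is `∂_x (x P_i) + ∂_y (y P_i)`. -/
def rowDiv2 (P : Fin 2 → P2) : Fin 2 → P2 := fun i => ∑ j : Fin 2, pderiv j (X j * P i)

/-- The scaled Euler operator `L q = 3q + x ∂ₓq + y ∂_y q`. -/
def Lmap (q : P2) : P2 := C 3 * q + X 0 * pderiv 0 q + X 1 * pderiv 1 q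

lemma coeff_X_mul_pderiv (i : Fin 2) (q : P2) (s : Fin 2 →₀ ℕ) :
    coeff s (X i * pderiv i q) = (s i : ℝ) * coeff s q := by
  induction q using MvPolynomial.induction_on' with
  | add p q hp hq => simp only [map_add, mul_add, coeff_add, hp, hq, mul_add]
  | monomial t c =>
    rw [pderiv_monomial]
    by_cases h : t i = 0
    · rcases eq_or_ne s t with rfl | hst
      · simp [h]
      · simp [h, coeff_monomial, Ne.symm hst]
    · have ht : Finsupp.single i 1 + (t - Finsupp.single i 1) = t := by
        ext j
        rcases eq_or_ne j i with rfl | hj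
        · simp [Finsupp.single_apply]; omega
        · simp [Finsupp.single_apply, Ne.symm hj]
      rw [X, monomial_mul, one_mul, ht]
      rcases eq_or_ne s t with rfl | hst
      · simp [coeff_monomial]; ring
      · simp [coeff_monomial, Ne.symm hst]

lemma coeff_Lmap (q : P2) (s : Fin 2 →₀ ℕ) :
    coeff s (Lmap q) = (3 + s 0 + s 1 : ℝ) * coeff s q := by
  simp only [Lmap, coeff_add, coeff_C_mul, coeff_X_mul_pderiv]
  ring

lemma factor_ne (s : Fin 2 →₀ ℕ) : (3 + s 0 + s 1 : ℝ) ≠ 0 := by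
  positivity

lemma Lmap_inj {q q' : P2} (h : Lmap q = Lmap q') : q = q' := by
  ext s
  have := congrArg (coeff s) h
  rw [coeff_Lmap, coeff_Lmap] at this
  exact mul_left_cancel₀ (factor_ne s) this

lemma support_Lmap (q : P2) : (Lmap q).support ⊆ q.support := by
  intro s hs
  simp only [mem_support_iff, coeff_Lmap] at hs ⊢
  exact fun h => hs (by rw [h, mul_zero])

/-- Inverse of `Lmap`. -/
def Linv (q : P2) : P2 :=
  ∑ s ∈ q.support, monomial s ((3 + s 0 + s 1 : ℝ)⁻¹ * coeff s q)

lemma coeff_Linv (q : P2) (s : Fin 2 →₀ ℕ) :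
    coeff s (Linv q) = (3 + s 0 + s 1 : ℝ)⁻¹ * coeff s q := by
  by_cases hs : s ∈ q.support
  · rw [Linv, coeff_sum, Finset.sum_eq_single s (fun t _ ht => by
      simp [coeff_monomial, ht]) (fun h => absurd hs h)]
    simp [coeff_monomial]
  · have h0 : coeff s q = 0 := by simpa using hs
    rw [h0, mul_zero, Linv, coeff_sum]
    apply Finset.sum_eq_zero
    intro t ht
    have : t ≠ s := fun h => hs (h ▸ ht)
    simp [coeff_monomial, this]

lemma Lmap_Linv (q : P2) : Lmap (Linv q) = q := by
  ext s
  rw [coeff_Lmap, coeff_Linv, ← mul_assoc, mul_inv_cancel₀ (factor_ne s), one_mul]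

lemma support_Linv (q : P2) : (Linv q).support ⊆ q.support := by
  intro s hs
  simp only [mem_support_iff, coeff_Linv] at hs ⊢
  exact fun h => hs (by rw [h, mul_zero])

lemma Lmap_zero : Lmap 0 = 0 := by simp [Lmap]
lemma Linv_zero : Linv 0 = 0 := by simp [Linv]


lemma pderiv_X_mul (j : Fin 2) (p : P2) : pderiv j (X j * p) = p + X j * pderiv j p := by
  rw [Derivation.leibniz, pderiv_X, Pi.single_eq_same, smul_eq_mul, smul_eq_mul, mul_one]
  ring

lemma pderiv_X_mul_ne {i j : Fin 2} (h : j ≠ i) (p : P2) :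
    pderiv i (X j * p) = X j * pderiv i p := by
  rw [Derivation.leibniz, pderiv_X, Pi.single_eq_of_ne h, smul_eq_mul, smul_eq_mul, mul_zero,
    add_zero]

lemma rowDiv2_pair (q : P2) :
    rowDiv2 ![-(X 1 * q), X 0 * q] = ![-(X 1 * Lmap q), X 0 * Lmap q] := by
  have e0 : pderiv 0 (X 0 * (-(X 1 * q))) + pderiv 1 (X 1 * (-(X 1 * q)))
      = -(X 1 * Lmap q) := by
    simp only [mul_neg, map_neg, pderiv_X_mul, pderiv_X_mul_ne (show (1:Fin 2) ≠ 0 by decide),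
      pderiv_X_mul_ne (show (0:Fin 2) ≠ 1 by decide)]
    rw [Lmap]
    have h3 : (C 3 : P2) = 1 + 1 + 1 := by
      rw [show (3:ℝ) = 1 + 1 + 1 by norm_num, map_add, map_add, C_1]
    rw [h3]
    ring
  have e1 : pderiv 0 (X 0 * (X 0 * q)) + pderiv 1 (X 1 * (X 0 * q))
      = X 0 * Lmap q := by
    simp only [pderiv_X_mul, pderiv_X_mul_ne (show (1:Fin 2) ≠ 0 by decide),
      pderiv_X_mul_ne (show (0:Fin 2) ≠ 1 by decide)]
    rw [Lmap]
    have h3 : (C 3 : P2) = 1 + 1 + 1 := by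
      rw [show (3:ℝ) = 1 + 1 + 1 by norm_num, map_add, map_add, C_1]
    rw [h3]
    ring
  funext i
  fin_cases i
  · simpa [rowDiv2, Fin.sum_univ_two] using e0
  · simpa [rowDiv2, Fin.sum_univ_two] using e1

lemma totalDegree_X_mul_lb (i : Fin 2) {q : P2} (hq : q ≠ 0) :
    q.totalDegree + 1 ≤ (X i * q).totalDegree := by
  classical
  obtain ⟨s, hs, hsum⟩ := Finset.exists_mem_eq_sup q.support
    (support_nonempty.mpr hq) (fun s => s.sum fun _ e => e)
  have hmem : Finsupp.single i 1 + s ∈ (X i * q).support := by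
    rw [support_X_mul, Finset.mem_map]
    exact ⟨s, hs, rfl⟩
  have := le_totalDegree hmem
  rw [Finsupp.sum_add_index' (fun _ => rfl) (fun _ _ _ => rfl)] at this
  rw [totalDegree, hsum]
  simpa [Finsupp.sum_single_index, add_comm] using this

lemma totalDegree_X_mul_ub (i : Fin 2) (q : P2) :
    (X i * q).totalDegree ≤ q.totalDegree + 1 := by
  refine (totalDegree_mul _ _).trans ?_
  rw [totalDegree_X]
  omega

lemma exists_factor {P0 P1 : P2} (h : X 0 * P0 + X 1 * P1 = 0) :
    ∃ q : P2, P0 = -(X 1 * q) ∧ P1 = X 0 * q := by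
  classical
  have hcoeff : ∀ t : Fin 2 →₀ ℕ, t 0 = 0 → coeff t P1 = 0 := by
    intro t ht
    have h1 : coeff (Finsupp.single 1 1 + t) (X 0 * P0 + X 1 * P1) = 0 := by rw [h, coeff_zero]
    rw [coeff_add, coeff_X_mul, coeff_X_mul'] at h1
    have h0 : (0 : Fin 2) ∉ (Finsupp.single (1:Fin 2) 1 + t).support := by
      simp [Finsupp.single_apply, ht]
    rw [if_neg h0, zero_add] at h1
    exact h1
  set q : P2 := ∑ s ∈ P1.support, monomial (s - Finsupp.single 0 1) (coeff s P1) with hqdef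
  have hP1 : P1 = X 0 * q := by
    rw [hqdef, Finset.mul_sum]
    conv_lhs => rw [P1.as_sum]
    refine Finset.sum_congr rfl fun s hs => ?_
    have hs0 : s 0 ≠ 0 := by
      intro h0
      exact (mem_support_iff.mp hs) (hcoeff s h0)
    have hadj : Finsupp.single (0:Fin 2) 1 + (s - Finsupp.single 0 1) = s := by
      ext j
      rcases eq_or_ne j 0 with rfl | hj
      · simp [Finsupp.single_apply]; omega
      · simp [Finsupp.single_apply, Ne.symm hj]
    rw [X, monomial_mul, one_mul, hadj]
  have hP0 : P0 = -(X 1 * q) := by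
    have hx : (X 0 : P2) ≠ 0 := X_ne_zero 0
    apply mul_left_cancel₀ hx
    rw [hP1] at h
    linear_combination h
  exact ⟨q, hP0, hP1⟩

theorem rowDiv2_isomorphism (k : ℕ) :
    (∀ P Q : Fin 2 → P2, rowDiv2 (P + Q) = rowDiv2 P + rowDiv2 Q) ∧
    (∀ (c : ℝ) (P : Fin 2 → P2), rowDiv2 (c • P) = c • rowDiv2 P) ∧
    Set.BijOn rowDiv2
      {P : Fin 2 → P2 | (∀ i, memP2 (k : ℤ) (P i)) ∧ X 0 * P 0 + X 1 * P 1 = 0}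
      {v : Fin 2 → P2 | ∃ q : P2, memP2 ((k : ℤ) - 1) q ∧ v = ![-(X 1 * q), X 0 * q]} := by
  refine ⟨?_, ?_, ?_, ?_, ?_⟩
  · intro P Q
    funext i
    simp [rowDiv2, Pi.add_apply, mul_add, map_add, Finset.sum_add_distrib]
  · intro c P
    funext i
    simp [rowDiv2, Pi.smul_apply, mul_smul_comm, map_smul, Finset.smul_sum]
  · -- MapsTo
    rintro P ⟨hdeg, htr⟩
    obtain ⟨q, hP0, hP1⟩ := exists_factor htr
    have hP : P = ![-(X 1 * q), X 0 * q] := by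
      funext i; fin_cases i <;> simpa using (by assumption : _)
    refine ⟨Lmap q, ?_, by rw [hP, rowDiv2_pair]⟩
    rcases eq_or_ne q 0 with rfl | hq
    · left; exact Lmap_zero
    · right
      have h1 := hdeg 1
      rw [hP1] at h1
      have hne : X 0 * q ≠ 0 := mul_ne_zero (X_ne_zero 0) hq
      rcases h1 with h1 | h1
      · exact absurd h1 hne
      · have h2 := totalDegree_X_mul_lb 0 hq
        have h3 : (Lmap q).totalDegree ≤ q.totalDegree :=
          totalDegree_le_of_support_subset (support_Lmap q)
        omega
  · -- InjOn
    rintro P ⟨hdegP, htrP⟩ P' ⟨hdegP', htrP'⟩ heq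
    obtain ⟨q, hP0, hP1⟩ := exists_factor htrP
    obtain ⟨q', hP0', hP1'⟩ := exists_factor htrP'
    have hP : P = ![-(X 1 * q), X 0 * q] := by
      funext i; fin_cases i <;> simpa using (by assumption : _)
    have hP' : P' = ![-(X 1 * q'), X 0 * q'] := by
      funext i; fin_cases i <;> simpa using (by assumption : _)
    rw [hP, hP', rowDiv2_pair, rowDiv2_pair] at heq
    have h1 := congrFun heq 1
    simp only [Matrix.cons_val_one, Matrix.head_cons] at h1
    have hqq : q = q' := Lmap_inj (mul_left_cancel₀ (X_ne_zero 0) h1)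
    rw [hP, hP', hqq]
  · -- SurjOn
    rintro v ⟨q, hq, rfl⟩
    refine ⟨![-(X 1 * Linv q), X 0 * Linv q], ⟨?_, ?_⟩, ?_⟩
    · rw [Fin.forall_fin_two]
      simp only [Matrix.cons_val_zero, Matrix.cons_val_one, Matrix.head_cons]
      rcases hq with rfl | hq
      · rw [Linv_zero]
        constructor <;> (left; ring)
      · have hub0 := totalDegree_X_mul_ub 1 (Linv q)
        have hub1 := totalDegree_X_mul_ub 0 (Linv q)
        have hsub : (Linv q).totalDegree ≤ q.totalDegree :=
          totalDegree_le_of_support_subset (support_Linv q)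
        constructor
        · right
          rw [totalDegree_neg]
          omega
        · right
          omega
    · simp only [Matrix.cons_val_zero, Matrix.cons_val_one, Matrix.head_cons]
      ring
    · rw [rowDiv2_pair, Lmap_Linv]
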